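/- Let n ≥ 1 and let b : Fin n → ℂ be a nonzero vector. Let B be the n×n complex matrix defined by: B_{i,0} = b_i for every i, B_{i,i+1} = 1 for every i ≤ n−2, and all other entries zero. Let e ∈ ℂ^n be the standard basis vector with 1 in the last coordinate (index n−1) and 0 elsewhere. Then for every natural number m, B^m·e ≠ 0. -/

import Mathlib

/-- Step 1 of the regular-singularity proof: for the matrix `B` with first
column `b ≠ 0` and superdiagonal `1`, no iterate `B^m` kills the last basis
vector `e`. -/
theorem pow_mulVec_lastBasis_ne_zero
    (n : ℕ) (hn : 1 ≤ n) (b : Fin n → ℂ) (hb : b ≠ 0)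
    (B : Matrix (Fin n) (Fin n) ℂ)
    (hcol : ∀ i : Fin n, ∀ j : Fin n, (j : ℕ) = 0 → B i j = b i)
    (hsup : ∀ i j : Fin n, (j : ℕ) = (i : ℕ) + 1 → B i j = 1)
    (hzero : ∀ i j : Fin n, (j : ℕ) ≠ 0 → (j : ℕ) ≠ (i : ℕ) + 1 → B i j = 0)
    (e : Fin n → ℂ) (he : ∀ i : Fin n, e i = if (i : ℕ) = n - 1 then 1 else 0) :
    ∀ m : ℕ, (B ^ m).mulVec e ≠ 0 := by
  -- step 1: B^k e is the (n-1-k)-th basis vector, for k ≤ n-1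
  have key : ∀ k (hk : k ≤ n - 1),
      (B ^ k).mulVec e = Pi.single (⟨n - 1 - k, by omega⟩ : Fin n) 1 := by
    intro k
    induction k with
    | zero =>
      intro _
      rw [pow_zero, Matrix.one_mulVec]
      funext i
      rw [he i, Pi.single_apply]
      by_cases h : (i : ℕ) = n - 1
      · simp [Fin.ext_iff, h]
      · simp [Fin.ext_iff, h]
    | succ k ih =>
      intro hk
      rw [pow_succ', ← Matrix.mulVec_mulVec, ih (by omega)]
      funext i
      simp only [Matrix.mulVec_single, Pi.smul_apply, op_smul_eq_mul, Matrix.col_apply, Pi.single_apply]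
      by_cases h : i = (⟨n - 1 - (k + 1), by omega⟩ : Fin n)
      · rw [if_pos h, hsup i ⟨n - 1 - k, by omega⟩ (by subst h; simp; omega), mul_one]
      · have hi : (i : ℕ) ≠ n - 1 - (k + 1) := fun hc => h (Fin.ext (by simp [hc]))
        rw [if_neg h, hzero i ⟨n - 1 - k, by omega⟩ (by simp; omega)
          (by simp; omega), zero_mul]
  -- step 2: B^n e = b
  have hBn : (B ^ n).mulVec e = b := by
    have h2 : B * B ^ (n - 1) = B ^ n := by rw [← pow_succ']; congr 1; omega
    rw [← h2, ← Matrix.mulVec_mulVec, key (n - 1) le_rfl]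
    funext i
    simp only [Matrix.mulVec_single, Pi.smul_apply, op_smul_eq_mul, Matrix.col_apply]
    rw [hcol i ⟨n - 1 - (n - 1), by omega⟩ (by simp), mul_one]
  -- step 3: linear-map version
  have hlin : ∀ m : ℕ, (B.mulVecLin ^ m) e = (B ^ m).mulVec e := by
    intro m
    induction m with
    | zero => simp
    | succ m ih =>
      rw [pow_succ', pow_succ', Module.End.mul_apply, ih, ← Matrix.mulVec_mulVec,
        Matrix.mulVecLin_apply]
  intro m hm
  apply hb
  have hmem : e ∈ LinearMap.ker (B.mulVecLin ^ m) := by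
    rw [LinearMap.mem_ker, hlin m, hm]
  have hle := Module.End.ker_pow_le_ker_pow_finrank (B.mulVecLin) m hmem
  rw [LinearMap.mem_ker] at hle
  have hfr : Module.finrank ℂ (Fin n → ℂ) = n := Module.finrank_fin_fun ℂ
  rw [hfr, hlin n, hBn] at hle
  exact hle.symm ▸ hle
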